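/- Let M and N be countable structures satisfying Hypothesis (H). If Aut(M) and Aut(N) are topologically isomorphic, then for every 0 < k ≤ ω the expanded structures E^ex_M(k) and E^ex_N(k) are isomorphic. -/

import Mathlib

open FirstOrder

namespace Paper

variable (L : FirstOrder.Language) (M : Type*) [L.Structure M]

/-- The group of automorphisms of a first-order structure, with composition. -/
instance autGroup : Group (M ≃[L] M) where
  one := FirstOrder.Language.Equiv.refl L M
  mul f g := f.comp g
  inv := FirstOrder.Language.Equiv.symm
  mul_assoc _ _ _ := rfl
  one_mul f := FirstOrder.Language.Equiv.ext fun a => by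
    show (FirstOrder.Language.Equiv.refl L M).comp f a = f a; simp
  mul_one f := FirstOrder.Language.Equiv.ext fun a => by
    show f.comp (FirstOrder.Language.Equiv.refl L M) a = f a; simp
  inv_mul_cancel f := FirstOrder.Language.Equiv.ext fun a => by
    show f.symm.comp f a = FirstOrder.Language.Equiv.refl L M a; simp

@[simp] theorem aut_one_apply (a : M) : (1 : M ≃[L] M) a = a := by
  show FirstOrder.Language.Equiv.refl L M a = a; simp
@[simp] theorem aut_mul_apply (f g : M ≃[L] M) (a : M) : (f * g) a = f (g a) := rfl
@[simp] theorem aut_inv_apply (f : M ≃[L] M) (a : M) : f⁻¹ a = f.symm a := rfl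
@[simp] theorem aut_coe_mul (f g : M ≃[L] M) : ⇑(f * g) = ⇑f ∘ ⇑g := rfl

/-- The natural action of the automorphism group on the structure. -/
instance autAction : MulAction (M ≃[L] M) M where
  smul f a := f a
  one_smul _ := rfl
  mul_smul _ _ _ := rfl

@[simp] theorem aut_smul_def (f : M ≃[L] M) (a : M) : f • a = f a := rfl

/-- The topology of pointwise convergence on the automorphism group (the domain
being regarded as discrete). -/
instance autTopology : TopologicalSpace (M ≃[L] M) :=
  letI : TopologicalSpace M := ⊥
  TopologicalSpace.induced (fun g => (g : M → M)) Pi.topologicalSpace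

/-- The pointwise stabilizer `G_(A)` of a set `A ⊆ M` in `Aut(M)`. -/
def pstab (A : Set M) : Subgroup (M ≃[L] M) where
  carrier := {g | ∀ a ∈ A, g a = a}
  one_mem' := fun _ _ => rfl
  mul_mem' := by
    intro f g hf hg a ha
    simp only [Set.mem_setOf_eq] at *
    rw [aut_mul_apply, hg a ha, hf a ha]
  inv_mem' := by
    intro f hf a ha
    simp only [Set.mem_setOf_eq] at *
    rw [aut_inv_apply]
    conv_lhs => rw [← hf a ha]
    exact f.symm_apply_apply a

/-- The setwise stabilizer `G_{A}` of a set `A ⊆ M` in `Aut(M)`. -/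
def sstab (A : Set M) : Subgroup (M ≃[L] M) where
  carrier := {g | g '' A = A}
  one_mem' := by
    simp only [Set.mem_setOf_eq]
    ext a; simp [Set.mem_image]
  mul_mem' := by
    intro f g hf hg
    simp only [Set.mem_setOf_eq] at *
    rw [aut_coe_mul, Set.image_comp, hg, hf]
  inv_mem' := by
    intro f hf
    simp only [Set.mem_setOf_eq] at *
    conv_lhs => rw [← hf]
    rw [Set.image_image]
    ext a; constructor
    · rintro ⟨x, hx, rfl⟩
      simpa [f.symm_apply_apply] using hx
    · intro ha
      exact ⟨a, ha, f.symm_apply_apply a⟩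

/-- The Galois-algebraic closure of `A ⊆ M`: the set of elements with finite orbit
under the pointwise stabilizer of `A`. -/
def aclg (A : Set M) : Set M :=
  {b | (MulAction.orbit (pstab L M A) b).Finite}

/-- The Galois-definable closure of the empty set: elements fixed by every automorphism. -/
def dclg0 : Set M := {b | ∀ g : M ≃[L] M, g b = b}

/-- `p : K ≃ K'` is an isomorphism between the induced substructures on `K` and `K'`. -/
def IsPartialIso (K K' : Set M) (p : K ≃ K') : Prop :=
  (∀ {n : ℕ} (f : L.Functions n) (x : Fin n → K),
      ∃ h : FirstOrder.Language.Structure.funMap f (fun i => (x i : M)) ∈ K,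
        (p ⟨FirstOrder.Language.Structure.funMap f (fun i => (x i : M)), h⟩ : M) =
          FirstOrder.Language.Structure.funMap f (fun i => (p (x i) : M))) ∧
  (∀ {n : ℕ} (r : L.Relations n) (x : Fin n → K),
      FirstOrder.Language.Structure.RelMap r (fun i => (x i : M)) ↔
        FirstOrder.Language.Structure.RelMap r (fun i => (p (x i) : M)))

/-- `A(M)`: the collection of Galois-algebraic closures of finite subsets of `M`. -/
def AA : Set (Set M) := {K | ∃ A : Set M, A.Finite ∧ K = aclg L M A}

/-- Hypothesis (H). -/
structure HypH : Prop where
  countable : Countable M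
  locallyFinite : ∀ A : Set M, A.Finite → (aclg L M A).Finite
  extendsIso : ∀ (K K' : Set M), K.Finite → K'.Finite →
    aclg L M K = K → aclg L M K' = K' → ∀ p : K ≃ K', IsPartialIso L M K K' p →
      ∃ g : M ≃[L] M, ∀ a : K, g a = (p a : M)
  openSandwich : ∀ H : Subgroup (M ≃[L] M), IsOpen (H : Set (M ≃[L] M)) →
    ∃! K : Set M, K.Finite ∧ aclg L M K = K ∧ pstab L M K ≤ H ∧ H ≤ sstab L M K


/-- Generalized pointwise stabilizer `G_(K,L)`. -/
def genStab (K : Set M) (Lsub : Subgroup (Equiv.Perm K)) : Subgroup (M ≃[L] M) where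
  carrier := {f | ∃ p ∈ Lsub, ∀ a : K, f a = (p a : M)}
  one_mem' := ⟨1, Lsub.one_mem, fun a => by simp⟩
  mul_mem' := by
    rintro f g ⟨p, hp, hfp⟩ ⟨q, hq, hgq⟩
    refine ⟨p * q, Lsub.mul_mem hp hq, fun a => ?_⟩
    rw [aut_mul_apply, hgq a, hfp (q a)]
    rfl
  inv_mem' := by
    rintro f ⟨p, hp, hfp⟩
    refine ⟨p⁻¹, Lsub.inv_mem hp, fun a => ?_⟩
    have h1 : f ((p⁻¹ a : K) : M) = ((p (p⁻¹ a) : K) : M) := hfp _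
    rw [show p (p⁻¹ a) = a from p.apply_symm_apply a] at h1
    rw [aut_inv_apply, ← h1, FirstOrder.Language.Equiv.symm_apply_apply]

/-- `GS(M)`: the collection of generalized pointwise stabilizers. -/
def GS : Set (Subgroup (M ≃[L] M)) :=
  {H | ∃ K ∈ AA L M, ∃ Lsub : Subgroup (Equiv.Perm K),
    (∀ p ∈ Lsub, IsPartialIso L M K K (p : K ≃ K)) ∧ H = genStab L M K Lsub}

/-- `PS(M)`: the collection of pointwise stabilizers of members of `A(M)`. -/
def PS : Set (Subgroup (M ≃[L] M)) := {H | ∃ K ∈ AA L M, H = pstab L M K}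

/-- The lattice `A₊(M)`. -/
def Aplus : Set (Set M) := AA L M ∪ {dclg0 L M}

/-- Covering relation in `S`. -/
def hasseCovers {α : Type*} (S : Set (Set α)) (A B : Set α) : Prop :=
  A ∈ S ∧ B ∈ S ∧ A ⊂ B ∧ ¬∃ C ∈ S, A ⊂ C ∧ C ⊂ B

/-- Adjacency in the Hasse diagram of `S`. -/
def hasseAdj {α : Type*} (S : Set (Set α)) (A B : Set α) : Prop :=
  hasseCovers S A B ∨ hasseCovers S B A

/-- `A_k(M)`: members of `A(M)` distinct from `dcl(∅)` at distance `≤ k` from the bottom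
of the lattice `A₊(M)` in its Hasse diagram. -/
def Ak (k : ℕ) : Set (Set M) :=
  {K | K ∈ AA L M ∧ K ≠ dclg0 L M ∧ ∃ (j : ℕ) (c : Fin (j + 1) → Set M), j ≤ k ∧
    c 0 = dclg0 L M ∧ c (Fin.last j) = K ∧
    ∀ i : Fin j, hasseAdj (Aplus L M) (c i.castSucc) (c i.succ)}

/-- `A_k(M)` for `k ≤ ω`, with `A_ω(M) = A(M)`. -/
def AkE (k : ℕ∞) : Set (Set M) :=
  match k with
  | ⊤ => AA L M
  | (k : ℕ) => Ak L M k

/-- `k_M`: the supremum of lengths of strict chains of Galois-algebraic closures of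
singletons. -/
noncomputable def kM : ℕ∞ :=
  ⨆ k ∈ {k : ℕ | ∃ a : Fin k → M, ∀ i j : Fin k, i < j → aclg L M {a i} ⊂ aclg L M {a j}},
    (k : ℕ∞)

/-- The domain of the expanded structure `E^ex_M(k)`: triples `(K, p, K')` with
`K, K' ∈ A_k(M)` and `p : K ≅ K'`. -/
structure ExTriple (k : ℕ∞) where
  K : Set M
  K' : Set M
  hK : K ∈ AkE L M k
  hK' : K' ∈ AkE L M k
  p : K ≃ K'
  iso : IsPartialIso L M K K' p

/-- The unary predicate of `E^ex_M(k)` holding of the identity triples. -/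
def IsIdTriple {k : ℕ∞} (t : ExTriple L M k) : Prop :=
  t.K = t.K' ∧ ∀ a : t.K, (t.p a : M) = (a : M)

/-- The `n`-ary relation `E_n` of `E^ex_M(k)`. -/
def ERel {k : ℕ∞} {n : ℕ} (x : Fin n → ExTriple L M k) : Prop :=
  ∃ g : M ≃[L] M, ∀ (i : Fin n) (a : (x i).K), g a = ((x i).p a : M)

/-- The binary relation `Dom` of `E^ex_M(k)`. -/
def DomRel {k : ℕ∞} (t s : ExTriple L M k) : Prop := IsIdTriple L M s ∧ s.K = t.K

/-- The binary relation `Cod` of `E^ex_M(k)`. -/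
def CodRel {k : ℕ∞} (t s : ExTriple L M k) : Prop := IsIdTriple L M s ∧ s.K = t.K'

variable {L M}

/-- A bijection between the domains of `E^ex_M(k)` and `E^ex_N(k)` is an isomorphism
if it preserves the identity-triple predicate, all the relations `E_n`, `Dom` and `Cod`. -/
def IsExIso {L' : FirstOrder.Language} {N : Type*} [L'.Structure N] {k : ℕ∞}
    (F : ExTriple L M k ≃ ExTriple L' N k) : Prop :=
  (∀ t, IsIdTriple L M t ↔ IsIdTriple L' N (F t)) ∧
  (∀ (n : ℕ) (x : Fin n → ExTriple L M k), ERel L M x ↔ ERel L' N (F ∘ x)) ∧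
  (∀ t s, DomRel L M t s ↔ DomRel L' N (F t) (F s)) ∧
  (∀ t s, CodRel L M t s ↔ CodRel L' N (F t) (F s))

variable (L M)

/-- The automorphism group of the expanded structure `E^ex_M(k)`. -/
def exAut (k : ℕ∞) : Subgroup (Equiv.Perm (ExTriple L M k)) where
  carrier := {σ | IsExIso (σ : ExTriple L M k ≃ ExTriple L M k)}
  one_mem' := by
    refine ⟨fun t => ?_, fun n x => ?_, fun t s => ?_, fun t s => ?_⟩ <;>
      simp [Equiv.Perm.coe_one, Function.comp_def]
  mul_mem' := by
    rintro σ τ ⟨hσ1, hσ2, hσ3, hσ4⟩ ⟨hτ1, hτ2, hτ3, hτ4⟩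
    refine ⟨fun t => ?_, fun n x => ?_, fun t s => ?_, fun t s => ?_⟩
    · exact (hτ1 t).trans (hσ1 (τ t))
    · exact (hτ2 n x).trans (hσ2 n (τ ∘ x))
    · exact (hτ3 t s).trans (hσ3 (τ t) (τ s))
    · exact (hτ4 t s).trans (hσ4 (τ t) (τ s))
  inv_mem' := by
    rintro σ ⟨hσ1, hσ2, hσ3, hσ4⟩
    refine ⟨fun t => ?_, fun n x => ?_, fun t s => ?_, fun t s => ?_⟩
    · have := hσ1 (σ⁻¹ t); simpa using this.symm
    · have := hσ2 n (⇑(σ⁻¹) ∘ x)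
      have hx : ⇑σ ∘ ⇑(σ⁻¹) ∘ x = x := by
        funext i; simp
      rw [hx] at this
      exact this.symm
    · have := hσ3 (σ⁻¹ t) (σ⁻¹ s); simpa using this.symm
    · have := hσ4 (σ⁻¹ t) (σ⁻¹ s); simpa using this.symm

/-- The subgroup of topological automorphisms of a topological group. -/
def topMulAut (G : Type*) [Group G] [TopologicalSpace G] : Subgroup (MulAut G) where
  carrier := {α | Continuous (α : G → G) ∧ Continuous (α.symm : G → G)}
  one_mem' := ⟨continuous_id, continuous_id⟩
  mul_mem' := by
    rintro α β ⟨hα1, hα2⟩ ⟨hβ1, hβ2⟩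
    exact ⟨hα1.comp hβ1, hβ2.comp hα2⟩
  inv_mem' := by
    rintro α ⟨h1, h2⟩
    exact ⟨h2, h1⟩

/-- A group isomorphism between topological groups which is a homeomorphism. -/
def IsTopIso {G H : Type*} [Group G] [Group H] [TopologicalSpace G] [TopologicalSpace H]
    (e : G ≃* H) : Prop :=
  Continuous (e : G → H) ∧ Continuous (e.symm : H → G)

/-- The natural homomorphism from `Aut(M)` to the symmetric group on `M`. -/
def toPerm : (M ≃[L] M) →* Equiv.Perm M where
  toFun g := g.toEquiv
  map_one' := rfl
  map_mul' f g := Equiv.ext fun _ => rfl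

/-- The orbit equivalence relation on `n`-tuples. -/
def orbRel (n : ℕ) (x y : Fin n → M) : Prop := ∃ g : M ≃[L] M, ∀ i, g (x i) = y i

/-- The automorphism group of the orbital structure `E_M`: permutations of `M`
preserving each orbit equivalence relation. -/
def autOrbital : Subgroup (Equiv.Perm M) where
  carrier := {f | ∀ (n : ℕ) (x y : Fin n → M),
    orbRel L M n x y ↔ orbRel L M n (f ∘ x) (f ∘ y)}
  one_mem' := by intro n x y; simp [Equiv.Perm.coe_one]
  mul_mem' := by
    intro f g hf hg n x y
    exact (hg n x y).trans (hf n (g ∘ x) (g ∘ y))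
  inv_mem' := by
    intro f hf n x y
    have := hf n (⇑(f⁻¹) ∘ x) (⇑(f⁻¹) ∘ y)
    have hx : ⇑f ∘ ⇑(f⁻¹) ∘ x = x := by funext i; simp
    have hy : ⇑f ∘ ⇑(f⁻¹) ∘ y = y := by funext i; simp
    rw [hx, hy] at this
    exact this.symm

/-- `Aut°(E_M)`: automorphisms of the orbital structure preserving each orbit
equivalence class. -/
def autOrbitalFix : Subgroup (Equiv.Perm M) where
  carrier := {f | f ∈ autOrbital L M ∧ ∀ (n : ℕ) (x : Fin n → M), orbRel L M n x (f ∘ x)}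
  one_mem' := ⟨(autOrbital L M).one_mem, fun n x => ⟨1, fun i => by simp [Equiv.Perm.coe_one]⟩⟩
  mul_mem' := by
    rintro f g ⟨hf, hf2⟩ ⟨hg, hg2⟩
    refine ⟨(autOrbital L M).mul_mem hf hg, fun n x => ?_⟩
    obtain ⟨a, ha⟩ := hg2 n x
    obtain ⟨b, hb⟩ := hf2 n (g ∘ x)
    exact ⟨b * a, fun i => by rw [aut_mul_apply, ha i, hb i]; rfl⟩
  inv_mem' := by
    rintro f ⟨hf, hf2⟩
    refine ⟨(autOrbital L M).inv_mem hf, fun n x => ?_⟩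
    obtain ⟨a, ha⟩ := hf2 n (⇑(f⁻¹) ∘ x)
    refine ⟨a⁻¹, fun i => ?_⟩
    have hi := ha i
    simp only [Function.comp_apply, Equiv.Perm.coe_inv, Equiv.apply_symm_apply] at hi
    rw [← hi, aut_inv_apply, FirstOrder.Language.Equiv.symm_apply_apply]
    rfl

/-- A homogeneous structure: isomorphisms between finite substructures extend to
automorphisms. -/
def Homogeneous : Prop :=
  ∀ (K K' : Set M), K.Finite → K'.Finite → ∀ p : K ≃ K',
    IsPartialIso L M K K' p → ∃ g : M ≃[L] M, ∀ a : K, g a = (p a : M)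

/-- Weak elimination of imaginaries, phrased group-theoretically: every open subgroup is
sandwiched between the pointwise and setwise stabilizers of a unique smallest finite
Galois-algebraically closed set. -/
def HasWEI : Prop :=
  ∀ H : Subgroup (M ≃[L] M), IsOpen (H : Set (M ≃[L] M)) →
    ∃ K : Set M, (K.Finite ∧ aclg L M K = K ∧ pstab L M K ≤ H ∧ H ≤ sstab L M K) ∧
      ∀ K' : Set M, (K'.Finite ∧ aclg L M K' = K' ∧ pstab L M K' ≤ H ∧ H ≤ sstab L M K') →
        K ⊆ K'

/-- No algebraicity: every finite set is Galois-algebraically closed. -/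
def NoAlgebraicity : Prop := ∀ A : Set M, A.Finite → aclg L M A = A

/-- The small index property: every subgroup of index `< 2^ℵ₀` is open. -/
def SIP : Prop :=
  ∀ H : Subgroup (M ≃[L] M), Cardinal.mk ((M ≃[L] M) ⧸ H) < Cardinal.continuum →
    IsOpen (H : Set (M ≃[L] M))

/-- An oligomorphic action: finitely many orbits on `n`-tuples for every `n`. -/
def Oligo (G : Type*) [Group G] (X : Type*) [MulAction G X] : Prop :=
  ∀ n : ℕ, Finite (MulAction.orbitRel.Quotient G (Fin n → X))

end Paper

namespace Paper

/-- ω-categoricity: `M` is, up to isomorphism, the unique countable model of its complete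
first-order theory. -/
def IsOmegaCategorical (L : FirstOrder.Language) (M : Type w) [L.Structure M] : Prop :=
  Countable M ∧ ∀ (N : Type w) (iN : L.Structure N), Countable N → Nonempty N →
    (@FirstOrder.Language.Theory.Model L N iN (L.completeTheory M)) →
      Nonempty (@FirstOrder.Language.Equiv L N M iN _)


section Reconstruction

open FirstOrder.Language

variable {L L' : FirstOrder.Language} {M N : Type*} [L.Structure M] [L'.Structure N]

lemma mem_pstab {A : Set M} {g : M ≃[L] M} : g ∈ pstab L M A ↔ ∀ a ∈ A, g a = a := Iff.rfl

lemma mem_sstab {A : Set M} {g : M ≃[L] M} : g ∈ sstab L M A ↔ ⇑g '' A = A := Iff.rfl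

lemma pstab_antitone {A B : Set M} (h : A ⊆ B) : pstab L M B ≤ pstab L M A :=
  fun _ hg a ha => hg a (h ha)

lemma pstab_le_sstab {A : Set M} : pstab L M A ≤ sstab L M A := by
  intro g hg
  rw [mem_pstab] at hg
  rw [mem_sstab]
  ext b
  constructor
  · rintro ⟨a, ha, rfl⟩; rwa [hg a ha]
  · intro hb; exact ⟨b, hb, hg b hb⟩

lemma orbit_def (P : Subgroup (M ≃[L] M)) (b : M) :
    MulAction.orbit P b = Set.range fun g : P => (g : M ≃[L] M) b := rfl

lemma mem_aclg {A : Set M} {b : M} :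
    b ∈ aclg L M A ↔ (MulAction.orbit (pstab L M A) b).Finite := Iff.rfl

lemma subset_aclg (A : Set M) : A ⊆ aclg L M A := by
  intro a ha
  rw [mem_aclg]
  refine Set.Finite.subset (Set.finite_singleton a) ?_
  rw [orbit_def]
  rintro _ ⟨g, rfl⟩
  simpa using g.2 a ha

lemma dclg0_subset_aclg (A : Set M) : dclg0 L M ⊆ aclg L M A := by
  intro a ha
  rw [mem_aclg]
  refine Set.Finite.subset (Set.finite_singleton a) ?_
  rw [orbit_def]
  rintro _ ⟨g, rfl⟩
  simpa using ha (g : M ≃[L] M)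

lemma aclg_subset_of_pstab_le {A B : Set M} (hB : aclg L M B = B)
    (h : pstab L M B ≤ pstab L M A) : A ⊆ B := by
  intro a ha
  rw [← hB, mem_aclg]
  refine Set.Finite.subset (Set.finite_singleton a) ?_
  rw [orbit_def]
  rintro _ ⟨g, rfl⟩
  simpa using h g.2 a ha

lemma pstab_inj {A B : Set M} (hA : aclg L M A = A) (hB : aclg L M B = B)
    (h : pstab L M A = pstab L M B) : A = B :=
  Set.Subset.antisymm (aclg_subset_of_pstab_le hB h.ge) (aclg_subset_of_pstab_le hA h.le)

lemma mem_pstab_image {A : Set M} (g : M ≃[L] M) (h : M ≃[L] M) :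
    h ∈ pstab L M (⇑g '' A) ↔ g⁻¹ * h * g ∈ pstab L M A := by
  rw [mem_pstab, mem_pstab]
  constructor
  · intro hh a ha
    have h1 := hh (g a) ⟨a, ha, rfl⟩
    simp only [aut_mul_apply, aut_inv_apply]
    rw [h1]
    exact g.symm_apply_apply a
  · rintro hh _ ⟨a, ha, rfl⟩
    have h1 := hh a ha
    simp only [aut_mul_apply, aut_inv_apply] at h1
    have h2 := congrArg g h1
    rwa [g.apply_symm_apply] at h2

lemma image_mem_aclg {A : Set M} {b : M} (g : M ≃[L] M) (hb : b ∈ aclg L M A) :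
    g b ∈ aclg L M (⇑g '' A) := by
  rw [mem_aclg] at hb ⊢
  refine Set.Finite.subset (Set.Finite.image ⇑g hb) ?_
  rw [orbit_def]
  rintro _ ⟨h, rfl⟩
  refine ⟨(g⁻¹ * ↑h * g) b, ?_, ?_⟩
  · rw [orbit_def]
    exact ⟨⟨g⁻¹ * ↑h * g, (mem_pstab_image g ↑h).1 h.2⟩, rfl⟩
  · simp only [aut_mul_apply, aut_inv_apply]
    rw [g.apply_symm_apply]

lemma aclg_image (g : M ≃[L] M) (A : Set M) :
    aclg L M (⇑g '' A) = ⇑g '' aclg L M A := by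
  apply Set.Subset.antisymm
  · intro b hb
    refine ⟨g.symm b, ?_, g.apply_symm_apply b⟩
    have h2 := image_mem_aclg (g := g⁻¹) hb
    have himg : ⇑g⁻¹ '' (⇑g '' A) = A := by
      rw [Set.image_image]
      ext a
      constructor
      · rintro ⟨x, hx, rfl⟩
        simpa using hx
      · intro ha
        exact ⟨a, ha, by simp⟩
    rw [himg] at h2
    simpa using h2
  · rintro _ ⟨b, hb, rfl⟩
    exact image_mem_aclg g hb

lemma range_factor {α β γ : Type*} [Finite γ] [Nonempty α] (f : α → β) (φ : α → γ)
    (h : ∀ x y, φ x = φ y → f x = f y) : (Set.range f).Finite := by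
  classical
  let F : γ → β := fun c => if hc : ∃ x, φ x = c then f hc.choose else f (Classical.arbitrary α)
  have hsub : Set.range f ⊆ Set.range F := by
    rintro _ ⟨x, rfl⟩
    refine ⟨φ x, ?_⟩
    simp only [F]
    rw [dif_pos ⟨x, rfl⟩]
    exact h _ _ (Exists.choose_spec (⟨x, rfl⟩ : ∃ y, φ y = φ x))
  exact (Set.finite_range F).subset hsub

lemma orbit_finite_factor {γ : Type*} [Finite γ] (P : Subgroup (M ≃[L] M)) (O : Set M)
    (hO : O.Finite) (b : M) (hb : b ∈ O) (φ : P → γ)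
    (h : ∀ g₁ g₂ : P, φ g₁ = φ g₂ →
      ⇑(g₁ : M ≃[L] M) '' O = ⇑(g₂ : M ≃[L] M) '' O) :
    (MulAction.orbit P b).Finite := by
  have hrange : (Set.range fun g : P => ⇑(g : M ≃[L] M) '' O).Finite :=
    range_factor _ φ h
  refine Set.Finite.subset (Set.Finite.sUnion hrange ?_) ?_
  · rintro _ ⟨g, rfl⟩
    exact hO.image _
  · rw [orbit_def]
    rintro _ ⟨g, rfl⟩
    exact ⟨⇑(g : M ≃[L] M) '' O, ⟨g, rfl⟩, ⟨b, hb, rfl⟩⟩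

lemma image_orbit_eq {P : Subgroup (M ≃[L] M)} (w : M ≃[L] M) (hw : w ∈ P) (b : M) :
    ⇑w '' MulAction.orbit P b = MulAction.orbit P b := by
  simp only [orbit_def]
  ext x
  constructor
  · rintro ⟨_, ⟨u, rfl⟩, rfl⟩
    exact ⟨(⟨w, hw⟩ : P) * u, rfl⟩
  · rintro ⟨u, rfl⟩
    refine ⟨(w⁻¹ * (u : M ≃[L] M)) b,
      ⟨⟨w⁻¹ * (u : M ≃[L] M), mul_mem (inv_mem hw) u.2⟩, rfl⟩, ?_⟩
    simp only [aut_mul_apply, aut_inv_apply]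
    rw [w.apply_symm_apply]

lemma pstab_smul_aclg {A : Set M} {g : M ≃[L] M} (hg : g ∈ pstab L M A) {b : M}
    (hb : b ∈ aclg L M A) : g b ∈ aclg L M A := by
  have h1 := image_mem_aclg g hb
  have h2 : ⇑g '' A = A := mem_sstab.1 (pstab_le_sstab hg)
  rwa [h2] at h1

lemma aclg_idem {A : Set M} (hfin : (aclg L M A).Finite) :
    aclg L M (aclg L M A) = aclg L M A := by
  apply Set.Subset.antisymm
  · intro b hb
    rw [mem_aclg] at hb ⊢
    haveI : Finite ↥(aclg L M A) := hfin.to_subtype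
    refine orbit_finite_factor (pstab L M A) (MulAction.orbit (pstab L M (aclg L M A)) b)
      hb b (MulAction.mem_orbit_self b)
      (fun g => fun a : ↥(aclg L M A) =>
        (⟨(g : M ≃[L] M) a, pstab_smul_aclg g.2 a.2⟩ : ↥(aclg L M A))) ?_
    intro g₁ g₂ hφ
    have hpt : ∀ a ∈ aclg L M A, (g₁ : M ≃[L] M) a = (g₂ : M ≃[L] M) a := by
      intro a ha
      exact Subtype.ext_iff.1 (congrFun hφ ⟨a, ha⟩)
    have hw : (g₂ : M ≃[L] M)⁻¹ * (g₁ : M ≃[L] M) ∈ pstab L M (aclg L M A) := by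
      rw [mem_pstab]
      intro a ha
      simp only [aut_mul_apply, aut_inv_apply]
      rw [hpt a ha]
      exact (g₂ : M ≃[L] M).symm_apply_apply a
    have him := image_orbit_eq _ hw b
    calc ⇑(g₁ : M ≃[L] M) '' MulAction.orbit (pstab L M (aclg L M A)) b
        = ⇑((g₂ : M ≃[L] M) * ((g₂ : M ≃[L] M)⁻¹ * (g₁ : M ≃[L] M))) ''
            MulAction.orbit (pstab L M (aclg L M A)) b := by
          rw [mul_inv_cancel_left]
      _ = ⇑(g₂ : M ≃[L] M) '' (⇑((g₂ : M ≃[L] M)⁻¹ * (g₁ : M ≃[L] M)) ''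
            MulAction.orbit (pstab L M (aclg L M A)) b) := by
          rw [aut_coe_mul, Set.image_comp]
      _ = ⇑(g₂ : M ≃[L] M) '' MulAction.orbit (pstab L M (aclg L M A)) b := by rw [him]
  · intro b hb
    rw [mem_aclg] at hb ⊢
    refine Set.Finite.subset hb ?_
    simp only [orbit_def]
    rintro _ ⟨g, rfl⟩
    exact ⟨⟨(g : M ≃[L] M), pstab_antitone (subset_aclg A) g.2⟩, rfl⟩

lemma funMap_mem_aclg {A : Set M} {n : ℕ} (f : L.Functions n) (x : Fin n → M)
    (hx : ∀ i, x i ∈ aclg L M A) : Structure.funMap f x ∈ aclg L M A := by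
  have hpi : (Set.pi Set.univ fun i => MulAction.orbit (pstab L M A) (x i)).Finite :=
    Set.Finite.pi fun i => hx i
  rw [mem_aclg]
  refine Set.Finite.subset (hpi.image fun y => Structure.funMap f y) ?_
  rw [orbit_def]
  rintro _ ⟨g, rfl⟩
  refine ⟨fun i => (g : M ≃[L] M) (x i), fun i _ => ?_, ?_⟩
  · exact ⟨g, rfl⟩
  · exact ((g : M ≃[L] M).map_fun f x).symm

lemma pstab_isOpen {A : Set M} (hA : A.Finite) :
    IsOpen ((pstab L M A : Subgroup (M ≃[L] M)) : Set (M ≃[L] M)) := by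
  letI : TopologicalSpace M := ⊥
  haveI : DiscreteTopology M := ⟨rfl⟩
  have h1 : ((pstab L M A : Subgroup (M ≃[L] M)) : Set (M ≃[L] M)) =
      (fun g : M ≃[L] M => (g : M → M)) ⁻¹' (⋂ a ∈ A, {f : M → M | f a = a}) := by
    ext g
    simp only [Set.mem_preimage, Set.mem_iInter, Set.mem_setOf_eq, SetLike.mem_coe]
    exact mem_pstab
  rw [h1]
  refine Continuous.isOpen_preimage continuous_induced_dom _ ?_
  refine hA.isOpen_biInter fun a _ => ?_
  have h2 : {f : M → M | f a = a} = (fun f : M → M => f a) ⁻¹' {a} := rfl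
  rw [h2]
  exact Continuous.isOpen_preimage (continuous_apply a) _ (isOpen_discrete {a})

lemma pstab_dclg0 : pstab L M (dclg0 L M) = ⊤ := by
  rw [eq_top_iff]
  exact fun g _ => mem_pstab.2 fun a ha => ha g

lemma subset_dclg0_of_pstab_eq_top {A : Set M} (h : pstab L M A = ⊤) : A ⊆ dclg0 L M := by
  intro a ha g
  have hg : g ∈ pstab L M A := by rw [h]; trivial
  exact mem_pstab.1 hg a ha

lemma IsTopIso.symm {G H : Type*} [Group G] [Group H] [TopologicalSpace G]
    [TopologicalSpace H] {e : G ≃* H} (he : IsTopIso e) : IsTopIso e.symm :=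
  ⟨he.2, by rw [MulEquiv.symm_symm]; exact he.1⟩

lemma map_equiv_le_iff {G H : Type*} [Group G] [Group H] (e : G ≃* H) {P Q : Subgroup G} :
    P.map e.toMonoidHom ≤ Q.map e.toMonoidHom ↔ P ≤ Q := by
  constructor
  · intro h x hx
    have h2 := h (Subgroup.mem_map_of_mem e.toMonoidHom hx)
    rw [Subgroup.mem_map_equiv] at h2
    simpa using h2
  · intro h x hx
    rw [Subgroup.mem_map_equiv] at hx ⊢
    exact h hx

lemma map_equiv_symm_map {G H : Type*} [Group G] [Group H] (e : G ≃* H) (P : Subgroup G) :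
    (P.map e.toMonoidHom).map e.symm.toMonoidHom = P := by
  ext x
  simp [Subgroup.mem_map_equiv]

lemma transfer (hM : HypH L M) (hN : HypH L' N)
    (e : (M ≃[L] M) ≃* (N ≃[L'] N)) (he : IsTopIso e)
    (K : Set M) (hKf : K.Finite) (hKc : aclg L M K = K) :
    ∃ K' : Set N, K'.Finite ∧ aclg L' N K' = K' ∧
      (pstab L M K).map e.toMonoidHom = pstab L' N K' := by
  have hopen : IsOpen (((pstab L M K).map e.toMonoidHom : Subgroup (N ≃[L'] N)) :
      Set (N ≃[L'] N)) := by
    have h1 : (((pstab L M K).map e.toMonoidHom : Subgroup (N ≃[L'] N)) : Set (N ≃[L'] N)) =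
        ⇑e.symm ⁻¹' ((pstab L M K : Subgroup (M ≃[L] M)) : Set (M ≃[L] M)) := by
      ext x
      simp only [Set.mem_preimage, SetLike.mem_coe]
      exact Subgroup.mem_map_equiv
    rw [h1]
    exact (pstab_isOpen hKf).preimage he.2
  obtain ⟨Ks, ⟨hKsf, hKsc, hKs1, hKs2⟩, -⟩ := hN.openSandwich _ hopen
  have hWopen : IsOpen (((pstab L' N Ks).comap e.toMonoidHom : Subgroup (M ≃[L] M)) :
      Set (M ≃[L] M)) := by
    rw [Subgroup.coe_comap]
    exact (pstab_isOpen hKsf).preimage he.1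
  have hWle : (pstab L' N Ks).comap e.toMonoidHom ≤ pstab L M K := by
    intro x hx
    have h2 := hKs1 (Subgroup.mem_comap.mp hx)
    rw [Subgroup.mem_map_equiv] at h2
    simpa using h2
  obtain ⟨KW, ⟨hKWf, hKWc, hKW1, hKW2⟩, -⟩ := hM.openSandwich _ hWopen
  haveI : Finite ↥Ks := hKsf.to_subtype
  have hKWK : KW ⊆ K := by
    intro a ha
    have key : a ∈ aclg L M K := by
      rw [mem_aclg]
      refine orbit_finite_factor (pstab L M K) KW hKWf a ha
        (fun g => fun c : ↥Ks => (⟨e (g : M ≃[L] M) c, by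
          have hg : e (g : M ≃[L] M) ∈ (pstab L M K).map e.toMonoidHom :=
            Subgroup.mem_map_of_mem _ g.2
          have hs : ⇑(e (g : M ≃[L] M)) '' Ks = Ks := mem_sstab.1 (hKs2 hg)
          have hmem := Set.mem_image_of_mem ⇑(e (g : M ≃[L] M)) c.2
          rwa [hs] at hmem⟩ : ↥Ks)) ?_
      intro g₁ g₂ hφ
      have hpt : ∀ c ∈ Ks, e (g₁ : M ≃[L] M) c = e (g₂ : M ≃[L] M) c := fun c hc =>
        Subtype.ext_iff.1 (congrFun hφ ⟨c, hc⟩)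
      have hW3 : (g₂ : M ≃[L] M)⁻¹ * (g₁ : M ≃[L] M) ∈
          (pstab L' N Ks).comap e.toMonoidHom := by
        rw [Subgroup.mem_comap]
        show (e ((g₂ : M ≃[L] M)⁻¹ * (g₁ : M ≃[L] M))) ∈ pstab L' N Ks
        rw [mem_pstab]
        intro c hc
        rw [map_mul, map_inv]
        simp only [aut_mul_apply, aut_inv_apply]
        rw [hpt c hc]
        exact (e (g₂ : M ≃[L] M)).symm_apply_apply c
      have him : ⇑((g₂ : M ≃[L] M)⁻¹ * (g₁ : M ≃[L] M)) '' KW = KW :=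
        mem_sstab.1 (hKW2 hW3)
      calc ⇑(g₁ : M ≃[L] M) '' KW
          = ⇑((g₂ : M ≃[L] M) * ((g₂ : M ≃[L] M)⁻¹ * (g₁ : M ≃[L] M))) '' KW := by
            rw [mul_inv_cancel_left]
        _ = ⇑(g₂ : M ≃[L] M) '' (⇑((g₂ : M ≃[L] M)⁻¹ * (g₁ : M ≃[L] M)) '' KW) := by
            rw [aut_coe_mul, Set.image_comp]
        _ = ⇑(g₂ : M ≃[L] M) '' KW := by rw [him]
    rwa [hKc] at key
  have hWeq : (pstab L' N Ks).comap e.toMonoidHom = pstab L M K :=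
    le_antisymm hWle (le_trans (pstab_antitone hKWK) hKW1)
  refine ⟨Ks, hKsf, hKsc, ?_⟩
  rw [← hWeq]
  exact Subgroup.map_comap_eq_self_of_surjective e.surjective _

open Classical in
noncomputable def theta (e : (M ≃[L] M) ≃* (N ≃[L'] N)) : Set M → Set N := fun K =>
  if h : ∃ K' : Set N, K'.Finite ∧ aclg L' N K' = K' ∧
      (pstab L M K).map e.toMonoidHom = pstab L' N K' then h.choose else ∅

lemma theta_spec (hM : HypH L M) (hN : HypH L' N)
    (e : (M ≃[L] M) ≃* (N ≃[L'] N)) (he : IsTopIso e)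
    {K : Set M} (hKf : K.Finite) (hKc : aclg L M K = K) :
    (theta e K).Finite ∧ aclg L' N (theta e K) = theta e K ∧
      (pstab L M K).map e.toMonoidHom = pstab L' N (theta e K) := by
  have h := transfer hM hN e he K hKf hKc
  unfold theta
  rw [dif_pos h]
  exact h.choose_spec

lemma theta_theta (hM : HypH L M) (hN : HypH L' N)
    (e : (M ≃[L] M) ≃* (N ≃[L'] N)) (he : IsTopIso e)
    {K : Set M} (hKf : K.Finite) (hKc : aclg L M K = K) :
    theta e.symm (theta e K) = K := by
  obtain ⟨h1, h2, h3⟩ := theta_spec hM hN e he hKf hKc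
  obtain ⟨h4, h5, h6⟩ := theta_spec hN hM e.symm (IsTopIso.symm he) h1 h2
  rw [← h3, map_equiv_symm_map] at h6
  exact (pstab_inj hKc h5 h6).symm

lemma theta_inj (hM : HypH L M) (hN : HypH L' N)
    (e : (M ≃[L] M) ≃* (N ≃[L'] N)) (he : IsTopIso e)
    {K₁ K₂ : Set M} (hf1 : K₁.Finite) (hc1 : aclg L M K₁ = K₁)
    (hf2 : K₂.Finite) (hc2 : aclg L M K₂ = K₂)
    (h : theta e K₁ = theta e K₂) : K₁ = K₂ := by
  have h1 := theta_theta hM hN e he hf1 hc1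
  rw [h, theta_theta hM hN e he hf2 hc2] at h1
  exact h1.symm

lemma theta_subset_iff (hM : HypH L M) (hN : HypH L' N)
    (e : (M ≃[L] M) ≃* (N ≃[L'] N)) (he : IsTopIso e)
    {K₁ K₂ : Set M} (hf1 : K₁.Finite) (hc1 : aclg L M K₁ = K₁)
    (hf2 : K₂.Finite) (hc2 : aclg L M K₂ = K₂) :
    theta e K₁ ⊆ theta e K₂ ↔ K₁ ⊆ K₂ := by
  obtain ⟨hf1', hc1', hm1⟩ := theta_spec hM hN e he hf1 hc1
  obtain ⟨hf2', hc2', hm2⟩ := theta_spec hM hN e he hf2 hc2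
  constructor
  · intro h
    refine aclg_subset_of_pstab_le hc2 ?_
    rw [← map_equiv_le_iff e, hm1, hm2]
    exact pstab_antitone h
  · intro h
    refine aclg_subset_of_pstab_le hc2' ?_
    rw [← hm1, ← hm2, map_equiv_le_iff]
    exact pstab_antitone h

lemma theta_image (hM : HypH L M) (hN : HypH L' N)
    (e : (M ≃[L] M) ≃* (N ≃[L'] N)) (he : IsTopIso e)
    {K : Set M} (hKf : K.Finite) (hKc : aclg L M K = K) (g : M ≃[L] M) :
    theta e (⇑g '' K) = ⇑(e g) '' theta e K := by
  obtain ⟨hf, hc, hm⟩ := theta_spec hM hN e he hKf hKc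
  have hKf2 : (⇑g '' K).Finite := hKf.image _
  have hKc2 : aclg L M (⇑g '' K) = ⇑g '' K := by rw [aclg_image, hKc]
  obtain ⟨hf2, hc2, hm2⟩ := theta_spec hM hN e he hKf2 hKc2
  have hc3 : aclg L' N (⇑(e g) '' theta e K) = ⇑(e g) '' theta e K := by
    rw [aclg_image, hc]
  refine pstab_inj hc2 hc3 ?_
  rw [← hm2]
  have harg : ∀ x : N ≃[L'] N, e.symm ((e g)⁻¹ * x * e g) = g⁻¹ * e.symm x * g := by
    intro x
    rw [map_mul, map_mul, map_inv, MulEquiv.symm_apply_apply]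
  ext x
  rw [Subgroup.mem_map_equiv]
  constructor
  · intro hx
    rw [mem_pstab_image g (e.symm x)] at hx
    rw [mem_pstab_image (e g) x, ← hm, Subgroup.mem_map_equiv, harg]
    exact hx
  · intro hx
    rw [mem_pstab_image (e g) x, ← hm, Subgroup.mem_map_equiv, harg] at hx
    rw [mem_pstab_image g (e.symm x)]
    exact hx

lemma dclg0_finite (hM : HypH L M) : (dclg0 L M).Finite :=
  Set.Finite.subset (hM.locallyFinite ∅ Set.finite_empty) (dclg0_subset_aclg ∅)

lemma theta_dclg0 (hM : HypH L M) (hN : HypH L' N)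
    (e : (M ≃[L] M) ≃* (N ≃[L'] N)) (he : IsTopIso e)
    (hc : aclg L M (dclg0 L M) = dclg0 L M) :
    theta e (dclg0 L M) = dclg0 L' N := by
  obtain ⟨hf', hc', hm⟩ := theta_spec hM hN e he (dclg0_finite hM) hc
  rw [pstab_dclg0, Subgroup.map_top_of_surjective _ e.surjective] at hm
  apply Set.Subset.antisymm
  · exact subset_dclg0_of_pstab_eq_top hm.symm
  · rw [← hc']
    exact dclg0_subset_aclg _

lemma theta_ne_dclg0 (hM : HypH L M) (hN : HypH L' N)
    (e : (M ≃[L] M) ≃* (N ≃[L'] N)) (he : IsTopIso e)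
    {K : Set M} (hKf : K.Finite) (hKc : aclg L M K = K) (hne : K ≠ dclg0 L M) :
    theta e K ≠ dclg0 L' N := by
  intro h
  obtain ⟨hf', hc', hm⟩ := theta_spec hM hN e he hKf hKc
  rw [h, pstab_dclg0] at hm
  have htop : pstab L M K = ⊤ := by
    rw [eq_top_iff]
    intro x _
    have h2 : e x ∈ (pstab L M K).map e.toMonoidHom := by rw [hm]; trivial
    rw [Subgroup.mem_map_equiv] at h2
    simpa using h2
  apply hne
  apply Set.Subset.antisymm (subset_dclg0_of_pstab_eq_top htop)
  rw [← hKc]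
  exact dclg0_subset_aclg _

lemma AA_iff (hM : HypH L M) {K : Set M} :
    K ∈ AA L M ↔ K.Finite ∧ aclg L M K = K := by
  constructor
  · rintro ⟨A, hA, rfl⟩
    have hf := hM.locallyFinite A hA
    exact ⟨hf, aclg_idem hf⟩
  · rintro ⟨h1, h2⟩
    exact ⟨K, h1, h2.symm⟩

lemma AkE_subset_AA {k : ℕ∞} : AkE L M k ⊆ AA L M := by
  induction k using WithTop.recTopCoe with
  | top => exact fun K h => h
  | coe k => exact fun K h => h.1

end Reconstruction

section Reconstruction2

open FirstOrder.Language

variable {L L' : FirstOrder.Language} {M N : Type*} [L.Structure M] [L'.Structure N]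

open Classical in
/-- Total version of `theta` on the lattice `A₊`. -/
noncomputable def Theta (e : (M ≃[L] M) ≃* (N ≃[L'] N)) : Set M → Set N := fun X =>
  if X = dclg0 L M then dclg0 L' N else theta e X

lemma Theta_dclg0 (e : (M ≃[L] M) ≃* (N ≃[L'] N)) :
    Theta e (dclg0 L M) = dclg0 L' N := by
  unfold Theta
  rw [if_pos rfl]

lemma Theta_eq_theta (hM : HypH L M) (hN : HypH L' N)
    (e : (M ≃[L] M) ≃* (N ≃[L'] N)) (he : IsTopIso e)
    {X : Set M} (h1 : X.Finite) (h2 : aclg L M X = X) : Theta e X = theta e X := by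
  unfold Theta
  by_cases hX : X = dclg0 L M
  · rw [if_pos hX, hX]
    exact (theta_dclg0 hM hN e he (hX ▸ h2)).symm
  · rw [if_neg hX]

lemma mem_AA_of_mem_Aplus {X : Set M} (hX : X ∈ Aplus L M) (hXd : X ≠ dclg0 L M) :
    X ∈ AA L M := by
  cases hX with
  | inl h => exact h
  | inr h => exact absurd h hXd

lemma dclg0_subset_of_mem_Aplus (hM : HypH L M) {Y : Set M} (hY : Y ∈ Aplus L M) :
    dclg0 L M ⊆ Y := by
  by_cases h : Y = dclg0 L M
  · rw [h]
  · obtain ⟨-, h2⟩ := (AA_iff hM).1 (mem_AA_of_mem_Aplus hY h)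
    rw [← h2]
    exact dclg0_subset_aclg _

lemma Theta_mem_Aplus (hM : HypH L M) (hN : HypH L' N)
    (e : (M ≃[L] M) ≃* (N ≃[L'] N)) (he : IsTopIso e)
    {X : Set M} (hX : X ∈ Aplus L M) : Theta e X ∈ Aplus L' N := by
  by_cases hXd : X = dclg0 L M
  · rw [hXd, Theta_dclg0]
    exact Set.mem_union_right _ rfl
  · obtain ⟨h1, h2⟩ := (AA_iff hM).1 (mem_AA_of_mem_Aplus hX hXd)
    rw [Theta_eq_theta hM hN e he h1 h2]
    obtain ⟨hf', hc', -⟩ := theta_spec hM hN e he h1 h2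
    exact Set.mem_union_left _ ((AA_iff hN).2 ⟨hf', hc'⟩)

lemma Theta_Theta (hM : HypH L M) (hN : HypH L' N)
    (e : (M ≃[L] M) ≃* (N ≃[L'] N)) (he : IsTopIso e)
    {Y : Set N} (hY : Y ∈ Aplus L' N) : Theta e (Theta e.symm Y) = Y := by
  by_cases hYd : Y = dclg0 L' N
  · rw [hYd, Theta_dclg0, Theta_dclg0]
  · obtain ⟨h1, h2⟩ := (AA_iff hN).1 (mem_AA_of_mem_Aplus hY hYd)
    rw [Theta_eq_theta hN hM e.symm (IsTopIso.symm he) h1 h2]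
    obtain ⟨hf', hc', -⟩ := theta_spec hN hM e.symm (IsTopIso.symm he) h1 h2
    rw [Theta_eq_theta hM hN e he hf' hc']
    have h3 := theta_theta hN hM e.symm (IsTopIso.symm he) h1 h2
    rwa [MulEquiv.symm_symm] at h3

lemma Theta_subset_iff (hM : HypH L M) (hN : HypH L' N)
    (e : (M ≃[L] M) ≃* (N ≃[L'] N)) (he : IsTopIso e)
    {X Y : Set M} (hX : X ∈ Aplus L M) (hY : Y ∈ Aplus L M) :
    Theta e X ⊆ Theta e Y ↔ X ⊆ Y := by
  by_cases hXd : X = dclg0 L M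
  · subst hXd
    rw [Theta_dclg0]
    constructor
    · intro _
      exact dclg0_subset_of_mem_Aplus hM hY
    · intro _
      exact dclg0_subset_of_mem_Aplus hN (Theta_mem_Aplus hM hN e he hY)
  · obtain ⟨hX1, hX2⟩ := (AA_iff hM).1 (mem_AA_of_mem_Aplus hX hXd)
    obtain ⟨hf', hc', -⟩ := theta_spec hM hN e he hX1 hX2
    by_cases hYd : Y = dclg0 L M
    · subst hYd
      rw [Theta_dclg0, Theta_eq_theta hM hN e he hX1 hX2]
      constructor
      · intro h
        have h1 : theta e X = dclg0 L' N :=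
          Set.Subset.antisymm h (by rw [← hc']; exact dclg0_subset_aclg _)
        have h2 : X = dclg0 L M := by
          by_contra hne
          exact theta_ne_dclg0 hM hN e he hX1 hX2 hne h1
        rw [h2]
      · intro h
        have h2 : X = dclg0 L M :=
          Set.Subset.antisymm h (by rw [← hX2]; exact dclg0_subset_aclg _)
        exact absurd h2 hXd
    · obtain ⟨hY1, hY2⟩ := (AA_iff hM).1 (mem_AA_of_mem_Aplus hY hYd)
      rw [Theta_eq_theta hM hN e he hX1 hX2, Theta_eq_theta hM hN e he hY1 hY2]
      exact theta_subset_iff hM hN e he hX1 hX2 hY1 hY2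

lemma Theta_hasseCovers (hM : HypH L M) (hN : HypH L' N)
    (e : (M ≃[L] M) ≃* (N ≃[L'] N)) (he : IsTopIso e)
    {X Y : Set M} (h : hasseCovers (Aplus L M) X Y) :
    hasseCovers (Aplus L' N) (Theta e X) (Theta e Y) := by
  obtain ⟨hX, hY, hss, hnc⟩ := h
  rw [Set.ssubset_def] at hss
  refine ⟨Theta_mem_Aplus hM hN e he hX, Theta_mem_Aplus hM hN e he hY, ?_, ?_⟩
  · rw [Set.ssubset_def]
    exact ⟨(Theta_subset_iff hM hN e he hX hY).2 hss.1,
      fun hcon => hss.2 ((Theta_subset_iff hM hN e he hY hX).1 hcon)⟩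
  · rintro ⟨C, hC, h1, h2⟩
    have hC' : Theta e.symm C ∈ Aplus L M :=
      Theta_mem_Aplus hN hM e.symm (IsTopIso.symm he) hC
    have hTC : Theta e (Theta e.symm C) = C := Theta_Theta hM hN e he hC
    apply hnc
    refine ⟨Theta e.symm C, hC', ?_, ?_⟩
    · rw [Set.ssubset_def] at h1 ⊢
      constructor
      · apply (Theta_subset_iff hM hN e he hX hC').1
        rw [hTC]
        exact h1.1
      · intro hcon
        apply h1.2
        rw [← hTC]
        exact (Theta_subset_iff hM hN e he hC' hX).2 hcon
    · rw [Set.ssubset_def] at h2 ⊢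
      constructor
      · apply (Theta_subset_iff hM hN e he hC' hY).1
        rw [hTC]
        exact h2.1
      · intro hcon
        apply h2.2
        rw [← hTC]
        exact (Theta_subset_iff hM hN e he hY hC').2 hcon

lemma Theta_hasseAdj (hM : HypH L M) (hN : HypH L' N)
    (e : (M ≃[L] M) ≃* (N ≃[L'] N)) (he : IsTopIso e)
    {X Y : Set M} (h : hasseAdj (Aplus L M) X Y) :
    hasseAdj (Aplus L' N) (Theta e X) (Theta e Y) := by
  cases h with
  | inl h => exact Or.inl (Theta_hasseCovers hM hN e he h)
  | inr h => exact Or.inr (Theta_hasseCovers hM hN e he h)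

lemma AkE_map (hM : HypH L M) (hN : HypH L' N)
    (e : (M ≃[L] M) ≃* (N ≃[L'] N)) (he : IsTopIso e) (k : ℕ∞)
    {K : Set M} (hK : K ∈ AkE L M k) : theta e K ∈ AkE L' N k := by
  obtain ⟨hKf, hKc⟩ := (AA_iff hM).1 (AkE_subset_AA hK)
  obtain ⟨hf', hc', -⟩ := theta_spec hM hN e he hKf hKc
  have hAA' : theta e K ∈ AA L' N := (AA_iff hN).2 ⟨hf', hc'⟩
  revert hK
  induction k using WithTop.recTopCoe with
  | top => exact fun _ => hAA'
  | coe k =>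
    intro hK
    obtain ⟨-, hne, j, c, hj, hc0, hclast, hadjc⟩ := hK
    refine ⟨hAA', theta_ne_dclg0 hM hN e he hKf hKc hne, j, fun i => Theta e (c i), hj, ?_, ?_, ?_⟩
    · show Theta e (c 0) = dclg0 L' N
      rw [hc0, Theta_dclg0]
    · show Theta e (c (Fin.last j)) = theta e K
      rw [hclast]
      exact Theta_eq_theta hM hN e he hKf hKc
    · intro i
      exact Theta_hasseAdj hM hN e he (hadjc i)

/-- Restriction of an automorphism to an invariant set. -/
def restrictEquiv (g : M ≃[L] M) (A B : Set M) (h : ⇑g '' A = B) : ↥A ≃ ↥B where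
  toFun a := ⟨g a, h ▸ Set.mem_image_of_mem ⇑g a.2⟩
  invFun b := ⟨g.symm b, by
    have hb : (b : M) ∈ ⇑g '' A := h.symm ▸ b.2
    obtain ⟨a, ha, hab⟩ := hb
    rw [← hab, g.symm_apply_apply]
    exact ha⟩
  left_inv a := Subtype.ext (g.symm_apply_apply a)
  right_inv b := Subtype.ext (g.apply_symm_apply b)

@[simp] lemma restrictEquiv_coe (g : M ≃[L] M) (A B : Set M) (h : ⇑g '' A = B) (a : ↥A) :
    (restrictEquiv g A B h a : M) = g a := rfl

lemma restrict_isPartialIso (g : M ≃[L] M) (A B : Set M) (h : ⇑g '' A = B)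
    (hA : aclg L M A = A) : IsPartialIso L M A B (restrictEquiv g A B h) := by
  constructor
  · intro n f x
    have hmem : Structure.funMap f (fun i => ((x i : M))) ∈ A := by
      have h3 : Structure.funMap f (fun i => ((x i : M))) ∈ aclg L M A :=
        funMap_mem_aclg f _ fun i => subset_aclg A (x i).2
      rwa [hA] at h3
    refine ⟨hmem, ?_⟩
    rw [restrictEquiv_coe, g.map_fun]
    rfl
  · intro n r x
    exact (g.map_rel r fun i => ((x i : M))).symm

lemma ExTriple.ext' {k : ℕ∞} {t₁ t₂ : ExTriple L M k} (h1 : t₁.K = t₂.K)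
    (h2 : t₁.K' = t₂.K')
    (h3 : ∀ (a : M) (ha₁ : a ∈ t₁.K) (ha₂ : a ∈ t₂.K),
      ((t₁.p ⟨a, ha₁⟩ : M)) = ((t₂.p ⟨a, ha₂⟩ : M))) : t₁ = t₂ := by
  obtain ⟨K₁, K₁', hK₁, hK₁', p₁, iso₁⟩ := t₁
  obtain ⟨K₂, K₂', hK₂, hK₂', p₂, iso₂⟩ := t₂
  dsimp only at h1 h2 h3
  subst h1
  subst h2
  have hp : p₁ = p₂ := by
    apply Equiv.ext
    intro a
    apply Subtype.ext
    exact h3 a a.2 a.2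
  subst hp
  rfl

lemma tK_spec (hM : HypH L M) {k : ℕ∞} (t : ExTriple L M k) :
    t.K.Finite ∧ aclg L M t.K = t.K := (AA_iff hM).1 (AkE_subset_AA t.hK)

lemma tK'_spec (hM : HypH L M) {k : ℕ∞} (t : ExTriple L M k) :
    t.K'.Finite ∧ aclg L M t.K' = t.K' := (AA_iff hM).1 (AkE_subset_AA t.hK')

/-- An automorphism extending the partial isomorphism of a triple. -/
noncomputable def extAut (hM : HypH L M) {k : ℕ∞} (t : ExTriple L M k) : M ≃[L] M :=
  (hM.extendsIso t.K t.K' (tK_spec hM t).1 (tK'_spec hM t).1 (tK_spec hM t).2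
    (tK'_spec hM t).2 t.p t.iso).choose

lemma extAut_spec (hM : HypH L M) {k : ℕ∞} (t : ExTriple L M k) :
    ∀ a : ↥t.K, extAut hM t a = ((t.p a : M)) :=
  (hM.extendsIso t.K t.K' (tK_spec hM t).1 (tK'_spec hM t).1 (tK_spec hM t).2
    (tK'_spec hM t).2 t.p t.iso).choose_spec

lemma extAut_image (hM : HypH L M) {k : ℕ∞} (t : ExTriple L M k) :
    ⇑(extAut hM t) '' t.K = t.K' := by
  ext b
  constructor
  · rintro ⟨a, ha, rfl⟩
    rw [extAut_spec hM t ⟨a, ha⟩]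
    exact (t.p ⟨a, ha⟩).2
  · intro hb
    refine ⟨(t.p.symm ⟨b, hb⟩ : M), (t.p.symm ⟨b, hb⟩).2, ?_⟩
    rw [extAut_spec hM t (t.p.symm ⟨b, hb⟩), Equiv.apply_symm_apply]

lemma exMap_img (hM : HypH L M) (hN : HypH L' N)
    (e : (M ≃[L] M) ≃* (N ≃[L'] N)) (he : IsTopIso e) {k : ℕ∞} (t : ExTriple L M k) :
    ⇑(e (extAut hM t)) '' theta e t.K = theta e t.K' := by
  rw [← theta_image hM hN e he (tK_spec hM t).1 (tK_spec hM t).2 (extAut hM t),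
    extAut_image hM t]

/-- The map on triples induced by a topological isomorphism of automorphism groups. -/
noncomputable def exMap (hM : HypH L M) (hN : HypH L' N)
    (e : (M ≃[L] M) ≃* (N ≃[L'] N)) (he : IsTopIso e) {k : ℕ∞}
    (t : ExTriple L M k) : ExTriple L' N k where
  K := theta e t.K
  K' := theta e t.K'
  hK := AkE_map hM hN e he k t.hK
  hK' := AkE_map hM hN e he k t.hK'
  p := restrictEquiv (e (extAut hM t)) _ _ (exMap_img hM hN e he t)
  iso := restrict_isPartialIso _ _ _ (exMap_img hM hN e he t)
    (theta_spec hM hN e he (tK_spec hM t).1 (tK_spec hM t).2).2.1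

lemma exMap_congr (hM : HypH L M) (hN : HypH L' N)
    {e₁ e₂ : (M ≃[L] M) ≃* (N ≃[L'] N)} (h : e₁ = e₂)
    (he₁ : IsTopIso e₁) (he₂ : IsTopIso e₂) {k : ℕ∞} (t : ExTriple L M k) :
    exMap hM hN e₁ he₁ t = exMap hM hN e₂ he₂ t := by
  subst h
  rfl

lemma mem_pstab_theta (hM : HypH L M) (hN : HypH L' N)
    (e : (M ≃[L] M) ≃* (N ≃[L'] N)) (he : IsTopIso e)
    {K : Set M} (hf : K.Finite) (hc : aclg L M K = K) {u : M ≃[L] M} :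
    u ∈ pstab L M K ↔ e u ∈ pstab L' N (theta e K) := by
  rw [← (theta_spec hM hN e he hf hc).2.2]
  constructor
  · exact fun hu => Subgroup.mem_map_of_mem _ hu
  · intro hu
    rw [Subgroup.mem_map_equiv] at hu
    simpa using hu

lemma theta_agree (hM : HypH L M) (hN : HypH L' N)
    (e : (M ≃[L] M) ≃* (N ≃[L'] N)) (he : IsTopIso e)
    {K : Set M} (hf : K.Finite) (hc : aclg L M K = K) {u v : M ≃[L] M}
    (h : ∀ a ∈ K, u a = v a) : ∀ b ∈ theta e K, e u b = e v b := by
  intro b hb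
  have h1 : v⁻¹ * u ∈ pstab L M K := by
    rw [mem_pstab]
    intro a ha
    simp only [aut_mul_apply, aut_inv_apply]
    rw [h a ha]
    exact v.symm_apply_apply a
  have h2 := (mem_pstab_theta hM hN e he hf hc).1 h1
  rw [map_mul, map_inv] at h2
  have h3 : ((e v)⁻¹ * e u) b = b := mem_pstab.1 h2 b hb
  simp only [aut_mul_apply, aut_inv_apply] at h3
  have h4 := congrArg (e v) h3
  rwa [(e v).apply_symm_apply] at h4

lemma exMap_exMap (hM : HypH L M) (hN : HypH L' N)
    (e : (M ≃[L] M) ≃* (N ≃[L'] N)) (he : IsTopIso e) {k : ℕ∞} (t : ExTriple L M k) :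
    exMap hN hM e.symm (IsTopIso.symm he) (exMap hM hN e he t) = t := by
  obtain ⟨hf, hc⟩ := tK_spec hM t
  obtain ⟨hf', hc'⟩ := tK'_spec hM t
  refine ExTriple.ext' ?_ ?_ ?_
  · show theta e.symm (theta e t.K) = t.K
    exact theta_theta hM hN e he hf hc
  · show theta e.symm (theta e t.K') = t.K'
    exact theta_theta hM hN e he hf' hc'
  · intro a ha₁ ha₂
    show e.symm (extAut hN (exMap hM hN e he t)) a = ((t.p ⟨a, ha₂⟩ : M))
    have hθf := (theta_spec hM hN e he hf hc).1
    have hθc := (theta_spec hM hN e he hf hc).2.1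
    have hagr : ∀ b ∈ theta e t.K,
        (extAut hN (exMap hM hN e he t)) b = (e (extAut hM t)) b := by
      intro b hb
      exact extAut_spec hN (exMap hM hN e he t) ⟨b, hb⟩
    have h2 := theta_agree hN hM e.symm (IsTopIso.symm he) hθf hθc hagr a ha₁
    rw [MulEquiv.symm_apply_apply] at h2
    exact h2.trans (extAut_spec hM t ⟨a, ha₂⟩)

lemma exMap_idtriple (hM : HypH L M) (hN : HypH L' N)
    (e : (M ≃[L] M) ≃* (N ≃[L'] N)) (he : IsTopIso e) {k : ℕ∞} (t : ExTriple L M k) :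
    IsIdTriple L M t ↔ IsIdTriple L' N (exMap hM hN e he t) := by
  obtain ⟨hf, hc⟩ := tK_spec hM t
  obtain ⟨hf', hc'⟩ := tK'_spec hM t
  constructor
  · rintro ⟨hKK, hfix⟩
    constructor
    · show theta e t.K = theta e t.K'
      rw [hKK]
    · intro b
      show e (extAut hM t) (b : N) = (b : N)
      have hg : extAut hM t ∈ pstab L M t.K := by
        rw [mem_pstab]
        intro a ha
        rw [extAut_spec hM t ⟨a, ha⟩]
        exact hfix ⟨a, ha⟩
      exact mem_pstab.1 ((mem_pstab_theta hM hN e he hf hc).1 hg) b b.2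
  · rintro ⟨hKK, hfix⟩
    have hKeq : t.K = t.K' := theta_inj hM hN e he hf hc hf' hc' hKK
    refine ⟨hKeq, ?_⟩
    have hg : e (extAut hM t) ∈ pstab L' N (theta e t.K) := by
      rw [mem_pstab]
      intro b hb
      exact hfix ⟨b, hb⟩
    have hg2 := (mem_pstab_theta hM hN e he hf hc).2 hg
    intro a
    rw [← extAut_spec hM t a]
    exact mem_pstab.1 hg2 a a.2

lemma exMap_erel (hM : HypH L M) (hN : HypH L' N)
    (e : (M ≃[L] M) ≃* (N ≃[L'] N)) (he : IsTopIso e) {k : ℕ∞} {n : ℕ}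
    (x : Fin n → ExTriple L M k) :
    ERel L M x ↔ ERel L' N (fun i => exMap hM hN e he (x i)) := by
  constructor
  · rintro ⟨g, hg⟩
    refine ⟨e g, ?_⟩
    intro i b
    show e g (b : N) = e (extAut hM (x i)) (b : N)
    refine theta_agree hM hN e he (tK_spec hM (x i)).1 (tK_spec hM (x i)).2 ?_ b b.2
    intro a ha
    rw [hg i ⟨a, ha⟩]
    exact (extAut_spec hM (x i) ⟨a, ha⟩).symm
  · rintro ⟨h, hh⟩
    refine ⟨e.symm h, ?_⟩
    intro i a
    have hθf := (theta_spec hM hN e he (tK_spec hM (x i)).1 (tK_spec hM (x i)).2).1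
    have hθc := (theta_spec hM hN e he (tK_spec hM (x i)).1 (tK_spec hM (x i)).2).2.1
    have hagr : ∀ b ∈ theta e (x i).K, h b = (e (extAut hM (x i))) b := by
      intro b hb
      exact hh i ⟨b, hb⟩
    have h2 := theta_agree hN hM e.symm (IsTopIso.symm he) hθf hθc hagr (a : M) ?_
    · rw [MulEquiv.symm_apply_apply] at h2
      exact h2.trans (extAut_spec hM (x i) a)
    · rw [theta_theta hM hN e he (tK_spec hM (x i)).1 (tK_spec hM (x i)).2]
      exact a.2

lemma exMap_dom (hM : HypH L M) (hN : HypH L' N)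
    (e : (M ≃[L] M) ≃* (N ≃[L'] N)) (he : IsTopIso e) {k : ℕ∞}
    (t s : ExTriple L M k) :
    DomRel L M t s ↔ DomRel L' N (exMap hM hN e he t) (exMap hM hN e he s) := by
  constructor
  · rintro ⟨h1, h2⟩
    refine ⟨(exMap_idtriple hM hN e he s).1 h1, ?_⟩
    show theta e s.K = theta e t.K
    rw [h2]
  · rintro ⟨h1, h2⟩
    exact ⟨(exMap_idtriple hM hN e he s).2 h1,
      theta_inj hM hN e he (tK_spec hM s).1 (tK_spec hM s).2 (tK_spec hM t).1
        (tK_spec hM t).2 h2⟩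

lemma exMap_cod (hM : HypH L M) (hN : HypH L' N)
    (e : (M ≃[L] M) ≃* (N ≃[L'] N)) (he : IsTopIso e) {k : ℕ∞}
    (t s : ExTriple L M k) :
    CodRel L M t s ↔ CodRel L' N (exMap hM hN e he t) (exMap hM hN e he s) := by
  constructor
  · rintro ⟨h1, h2⟩
    refine ⟨(exMap_idtriple hM hN e he s).1 h1, ?_⟩
    show theta e s.K = theta e t.K'
    rw [h2]
  · rintro ⟨h1, h2⟩
    exact ⟨(exMap_idtriple hM hN e he s).2 h1,
      theta_inj hM hN e he (tK_spec hM s).1 (tK_spec hM s).2 (tK'_spec hM t).1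
        (tK'_spec hM t).2 h2⟩

end Reconstruction2


/-- For `M`, `N` satisfying Hypothesis (H), a topological isomorphism
between `Aut(M)` and `Aut(N)` yields isomorphisms `E^ex_M(k) ≅ E^ex_N(k)` for all
`0 < k ≤ ω`. -/
theorem stmt_15 (L L' : FirstOrder.Language) (M N : Type*) [L.Structure M] [L'.Structure N]
    (hM : HypH L M) (hN : HypH L' N)
    (e : (M ≃[L] M) ≃* (N ≃[L'] N)) (he : IsTopIso e) :
    ∀ k : ℕ∞, 0 < k → ∃ F : ExTriple L M k ≃ ExTriple L' N k, IsExIso F := by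
  intro k hk
  have linv : ∀ t : ExTriple L M k,
      exMap hN hM e.symm (IsTopIso.symm he) (exMap hM hN e he t) = t :=
    fun t => exMap_exMap hM hN e he t
  have rinv : ∀ s : ExTriple L' N k,
      exMap hM hN e he (exMap hN hM e.symm (IsTopIso.symm he) s) = s := by
    intro s
    have h1 := exMap_exMap hN hM e.symm (IsTopIso.symm he) s
    have h2 := exMap_congr hM hN (MulEquiv.symm_symm e)
      (IsTopIso.symm (IsTopIso.symm he)) he (exMap hN hM e.symm (IsTopIso.symm he) s)
    exact h2.symm.trans h1
  exact ⟨⟨exMap hM hN e he, exMap hN hM e.symm (IsTopIso.symm he), linv, rinv⟩,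
    fun t => exMap_idtriple hM hN e he t, fun n x => exMap_erel hM hN e he x,
    fun t s => exMap_dom hM hN e he t s, fun t s => exMap_cod hM hN e he t s⟩


end Paper
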